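/- Let u, v be linearly independent integer vectors in ℤᵈ with max(‖u‖, ‖v‖) = M. The Gauss lattice-basis-reduction algorithm (repeat: swap so ‖u‖ ≤ ‖v‖, then replace v by the shortest vector ±(v − m·u) making an acute angle with u; stop when ‖u‖ ≤ ‖v‖ after the replacement) terminates after at most ⌈log_√3 M⌉ + 1 iterations. -/

import Mathlib

open RealInnerProductSpace

/-- One iteration of the Gauss lattice-basis-reduction algorithm:
first swap so that `‖u‖ ≤ ‖v‖`, then replace `v` by the shortest vector
`ε • (v - m • u)` (with `m = [(u·v)/‖u‖²]` the nearest integer, ties upward,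
and the sign `ε` chosen so that the result makes an acute angle with `u`). -/
noncomputable def gaussStep (d : ℕ)
    (p : EuclideanSpace ℝ (Fin d) × EuclideanSpace ℝ (Fin d)) :
    EuclideanSpace ℝ (Fin d) × EuclideanSpace ℝ (Fin d) :=
  let u := if ‖p.1‖ ≤ ‖p.2‖ then p.1 else p.2
  let v := if ‖p.1‖ ≤ ‖p.2‖ then p.2 else p.1
  let f : ℝ := ⟪u, v⟫ / ‖u‖ ^ 2
  let m : ℤ := ⌈f - 1/2⌉
  let ε : ℝ := if 0 ≤ f - m then 1 else -1
  (u, ε • (v - (m : ℝ) • u))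

section GaussAux

variable {d : ℕ}

/-- A vector with integer coordinates. -/
def GIsInt (x : EuclideanSpace ℝ (Fin d)) : Prop := ∀ i, ∃ z : ℤ, x i = z

/-- The key inequality: if `a` is reduced w.r.t. `b` (inner product at most
`‖a‖²/2`), `‖a‖² ≤ 3‖b‖²` and `‖b‖ ≤ ‖a‖`, then subtracting any integer
multiple of `b` from `a` gives a vector at least as long as `b`. -/
lemma gauss_key (a b : EuclideanSpace ℝ (Fin d)) (m : ℤ) (hc : |⟪a, b⟫| ≤ ‖a‖ ^ 2 / 2)
    (h3 : ‖a‖ ^ 2 ≤ 3 * ‖b‖ ^ 2) (hba : ‖b‖ ≤ ‖a‖) :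
    ‖b‖ ≤ ‖a - (m : ℝ) • b‖ := by
  have hb0 : (0:ℝ) ≤ ‖b‖ := norm_nonneg _
  have hsq : ‖b‖ ^ 2 ≤ ‖a - (m : ℝ) • b‖ ^ 2 := by
    have hsm : ‖(m:ℝ) • b‖ ^ 2 = (m:ℝ) ^ 2 * ‖b‖ ^ 2 := by
      rw [norm_smul, mul_pow, Real.norm_eq_abs, sq_abs]
    have hexp : ‖a - (m : ℝ) • b‖ ^ 2
        = ‖a‖ ^ 2 - 2 * ((m:ℝ) * ⟪a, b⟫) + (m:ℝ) ^ 2 * ‖b‖ ^ 2 := by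
      rw [norm_sub_sq_real, real_inner_smul_right, hsm]
    rw [hexp]
    rcases eq_or_ne m 0 with h0 | h0
    · subst h0; push_cast; nlinarith [sq_nonneg ‖a‖, sq_nonneg ‖b‖]
    · have habs : (m:ℝ) * ⟪a, b⟫ ≤ |(m:ℝ)| * |⟪a, b⟫| := by
        calc (m:ℝ) * ⟪a, b⟫ ≤ |(m:ℝ) * ⟪a, b⟫| := le_abs_self _
        _ = |(m:ℝ)| * |⟪a, b⟫| := abs_mul _ _
      have hm2 : (m:ℝ) ^ 2 = |(m:ℝ)| ^ 2 := (sq_abs _).symm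
      rcases le_or_gt 2 |(m:ℝ)| with h2 | h2
      · have hMM : (0:ℝ) ≤ |(m:ℝ)| ^ 2 - 1 := by nlinarith
        have hprod : (0:ℝ) ≤ (|(m:ℝ)| - 1) * (|(m:ℝ)| - 2) * ‖a‖ ^ 2 :=
          mul_nonneg (mul_nonneg (by linarith) (by linarith)) (sq_nonneg _)
        nlinarith [hprod, mul_le_mul_of_nonneg_left hc (abs_nonneg (m:ℝ)),
          mul_le_mul_of_nonneg_left h3 hMM, abs_nonneg ⟪a, b⟫]
      · have hm1 : m = 1 ∨ m = -1 := by
          have hlt := (abs_lt.mp h2)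
          have hl : (-2:ℤ) < m := by exact_mod_cast hlt.1
          have hr : m < 2 := by exact_mod_cast hlt.2
          omega
        have habs' := abs_le.mp hc
        rcases hm1 with rfl | rfl <;> push_cast <;> nlinarith [habs'.1, habs'.2]
  calc ‖b‖ = Real.sqrt (‖b‖ ^ 2) := (Real.sqrt_sq hb0).symm
  _ ≤ Real.sqrt (‖a - (m : ℝ) • b‖ ^ 2) := Real.sqrt_le_sqrt hsq
  _ = _ := Real.sqrt_sq (norm_nonneg _)

lemma gaussStep_eq (p : EuclideanSpace ℝ (Fin d) × EuclideanSpace ℝ (Fin d)) :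
    gaussStep d p =
      (if ‖p.1‖ ≤ ‖p.2‖ then p.1 else p.2,
        (if 0 ≤ ⟪(if ‖p.1‖ ≤ ‖p.2‖ then p.1 else p.2), (if ‖p.1‖ ≤ ‖p.2‖ then p.2 else p.1)⟫ / ‖(if ‖p.1‖ ≤ ‖p.2‖ then p.1 else p.2)‖ ^ 2 -
            (⌈⟪(if ‖p.1‖ ≤ ‖p.2‖ then p.1 else p.2), (if ‖p.1‖ ≤ ‖p.2‖ then p.2 else p.1)⟫ / ‖(if ‖p.1‖ ≤ ‖p.2‖ then p.1 else p.2)‖ ^ 2 - 1/2⌉ : ℤ)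
          then (1:ℝ) else -1) •
          ((if ‖p.1‖ ≤ ‖p.2‖ then p.2 else p.1) -
            ((⌈⟪(if ‖p.1‖ ≤ ‖p.2‖ then p.1 else p.2), (if ‖p.1‖ ≤ ‖p.2‖ then p.2 else p.1)⟫ / ‖(if ‖p.1‖ ≤ ‖p.2‖ then p.1 else p.2)‖ ^ 2 - 1/2⌉ : ℤ) : ℝ) •
            (if ‖p.1‖ ≤ ‖p.2‖ then p.1 else p.2))) := rfl

/-- Generic form of the output of one step. -/
lemma gaussStep_spec (u v : EuclideanSpace ℝ (Fin d)) (hu : u ≠ 0) :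
    ∃ (m : ℤ) (ε : ℝ), (ε = 1 ∨ ε = -1) ∧
      (∀ p : EuclideanSpace ℝ (Fin d) × EuclideanSpace ℝ (Fin d),
        (if ‖p.1‖ ≤ ‖p.2‖ then p.1 else p.2) = u →
        (if ‖p.1‖ ≤ ‖p.2‖ then p.2 else p.1) = v →
        gaussStep d p = (u, ε • (v - (m:ℝ) • u))) ∧
      |⟪u, ε • (v - (m:ℝ) • u)⟫| ≤ ‖u‖ ^ 2 / 2 := by
  set f : ℝ := ⟪u, v⟫ / ‖u‖ ^ 2 with hf
  set m : ℤ := ⌈f - 1/2⌉ with hm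
  set ε : ℝ := if 0 ≤ f - m then 1 else -1 with he
  refine ⟨m, ε, by by_cases h : 0 ≤ f - (m:ℝ) <;> simp [he, h], ?_, ?_⟩
  · intro p h1 h2
    rw [gaussStep_eq p, h1, h2]
  · have hs : (0:ℝ) < ‖u‖ ^ 2 := pow_pos (norm_pos_iff.mpr hu) 2
    have hiv : ⟪u, v - (m:ℝ) • u⟫ = (f - m) * ‖u‖ ^ 2 := by
      rw [inner_sub_right, real_inner_smul_right, real_inner_self_eq_norm_sq, hf]
      field_simp
    have hfm1 : f - (m:ℝ) ≤ 1/2 := by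
      have := Int.le_ceil (f - 1/2)
      rw [← hm] at this; linarith
    have hfm2 : -(1/2) ≤ f - (m:ℝ) := by
      have := Int.ceil_lt_add_one (f - 1/2)
      rw [← hm] at this; linarith
    have : ⟪u, ε • (v - (m:ℝ) • u)⟫ = ε * ((f - m) * ‖u‖ ^ 2) := by
      rw [real_inner_smul_right, hiv]
    rw [this, abs_mul]
    have hε : |ε| = 1 := by by_cases h : 0 ≤ f - (m:ℝ) <;> simp [he, h]
    rw [hε, one_mul, abs_mul, abs_of_pos hs]
    have : |f - (m:ℝ)| ≤ 1/2 := abs_le.mpr ⟨hfm2, hfm1⟩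
    nlinarith

lemma GIsInt.step {u v : EuclideanSpace ℝ (Fin d)} (hu : GIsInt u) (hv : GIsInt v)
    {ε : ℝ} (hε : ε = 1 ∨ ε = -1) (m : ℤ) : GIsInt (ε • (v - (m:ℝ) • u)) := by
  intro i
  obtain ⟨zu, hzu⟩ := hu i
  obtain ⟨zv, hzv⟩ := hv i
  have : (ε • (v - (m:ℝ) • u)) i = ε * (v i - (m:ℝ) * u i) := by
    simp [PiLp.smul_apply, PiLp.sub_apply]
  rcases hε with rfl | rfl
  · exact ⟨zv - m * zu, by rw [this, hzu, hzv]; push_cast; ring⟩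
  · exact ⟨-(zv - m * zu), by rw [this, hzu, hzv]; push_cast; ring⟩

lemma one_le_norm_of_int {x : EuclideanSpace ℝ (Fin d)} (hx : GIsInt x) (h0 : x ≠ 0) :
    1 ≤ ‖x‖ := by
  obtain ⟨i, hi⟩ : ∃ i, x i ≠ 0 := by
    by_contra h
    push_neg at h
    exact h0 (by ext i; simpa using h i)
  obtain ⟨z, hz⟩ := hx i
  have hz0 : z ≠ 0 := by rintro rfl; simp [hz] at hi
  have h1 : (1:ℝ) ≤ |x i| := by
    rw [hz]
    have := Int.one_le_abs hz0
    calc (1:ℝ) = ((1:ℤ):ℝ) := by norm_num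
    _ ≤ ((|z|:ℤ):ℝ) := by exact_mod_cast this
    _ = |(z:ℝ)| := by push_cast; rfl
  have h2 : |x i| ≤ ‖x‖ := by
    rw [EuclideanSpace.norm_eq]
    have : |x i| = Real.sqrt (|x i| ^ 2) := (Real.sqrt_sq (abs_nonneg _)).symm
    rw [this]
    apply Real.sqrt_le_sqrt
    rw [sq_abs]
    calc x i ^ 2 = ‖x i‖ ^ 2 := by rw [Real.norm_eq_abs, sq_abs]
    _ ≤ ∑ j, ‖x j‖ ^ 2 := Finset.single_le_sum (f := fun j => ‖x j‖ ^ 2)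
        (fun j _ => sq_nonneg _) (Finset.mem_univ i)
  linarith

lemma indep_swap {u v : EuclideanSpace ℝ (Fin d)} (h : LinearIndependent ℝ ![u, v]) :
    LinearIndependent ℝ ![v, u] := by
  rw [LinearIndependent.pair_iff] at h ⊢
  intro s t hst
  obtain ⟨h1, h2⟩ := h t s (by rw [← hst]; abel)
  exact ⟨h2, h1⟩

lemma indep_step {u v : EuclideanSpace ℝ (Fin d)} (h : LinearIndependent ℝ ![u, v])
    {ε : ℝ} (hε : ε ≠ 0) (m : ℤ) : LinearIndependent ℝ ![u, ε • (v - (m:ℝ) • u)] := by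
  rw [LinearIndependent.pair_iff] at h ⊢
  intro s t hst
  have : (s - t * ε * m) • u + (t * ε) • v = 0 := by
    rw [← hst]
    simp only [smul_sub, smul_smul, sub_smul]
    ring_nf
    abel
  obtain ⟨h1, h2⟩ := h _ _ this
  have ht : t = 0 := by
    rcases mul_eq_zero.mp h2 with h | h
    · exact h
    · exact absurd h hε
  subst ht
  constructor
  · simpa using h1
  · rfl

/-- The invariant carried along the iteration. -/
def GGood (p : EuclideanSpace ℝ (Fin d) × EuclideanSpace ℝ (Fin d)) : Prop :=
  LinearIndependent ℝ ![p.1, p.2] ∧ GIsInt p.1 ∧ GIsInt p.2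

lemma GGood.fst_ne_zero {p : EuclideanSpace ℝ (Fin d) × EuclideanSpace ℝ (Fin d)}
    (hp : GGood p) : p.1 ≠ 0 := by
  have := hp.1.ne_zero 0
  simpa using this

lemma GGood.snd_ne_zero {p : EuclideanSpace ℝ (Fin d) × EuclideanSpace ℝ (Fin d)}
    (hp : GGood p) : p.2 ≠ 0 := by
  have := hp.1.ne_zero 1
  simpa using this

/-- Master lemma on one step of the algorithm. -/
lemma gaussStep_main (p : EuclideanSpace ℝ (Fin d) × EuclideanSpace ℝ (Fin d))
    (hp : GGood p) :
    GGood (gaussStep d p) ∧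
    (gaussStep d p).1 = (if ‖p.1‖ ≤ ‖p.2‖ then p.1 else p.2) ∧
    |⟪(gaussStep d p).1, (gaussStep d p).2⟫| ≤ ‖(gaussStep d p).1‖ ^ 2 / 2 ∧
    ∃ m : ℤ, ‖(gaussStep d p).2‖ =
      ‖(if ‖p.1‖ ≤ ‖p.2‖ then p.2 else p.1) - (m:ℝ) • (if ‖p.1‖ ≤ ‖p.2‖ then p.1 else p.2)‖ := by
  set u := if ‖p.1‖ ≤ ‖p.2‖ then p.1 else p.2 with hu
  set v := if ‖p.1‖ ≤ ‖p.2‖ then p.2 else p.1 with hv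
  have hu0 : u ≠ 0 := by
    rw [hu]; split
    · exact hp.fst_ne_zero
    · exact hp.snd_ne_zero
  have hindep : LinearIndependent ℝ ![u, v] := by
    rw [hu, hv]; split
    · exact hp.1
    · exact indep_swap hp.1
  have huint : GIsInt u := by rw [hu]; split; exacts [hp.2.1, hp.2.2]
  have hvint : GIsInt v := by rw [hv]; split; exacts [hp.2.2, hp.2.1]
  obtain ⟨m, ε, hε, heq, hinner⟩ := gaussStep_spec u v hu0
  have hstep : gaussStep d p = (u, ε • (v - (m:ℝ) • u)) := heq p rfl rfl
  have hε0 : ε ≠ 0 := by rcases hε with rfl | rfl <;> norm_num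
  have hεabs : |ε| = 1 := by rcases hε with rfl | rfl <;> norm_num
  refine ⟨⟨?_, ?_, ?_⟩, ?_, ?_, ⟨m, ?_⟩⟩
  · rw [hstep]; exact indep_step hindep hε0 m
  · rw [hstep]; exact huint
  · rw [hstep]; exact huint.step hvint hε m
  · rw [hstep]
  · rw [hstep]; exact hinner
  · rw [hstep]
    show ‖ε • (v - (m:ℝ) • u)‖ = ‖v - (m:ℝ) • u‖
    rw [norm_smul, Real.norm_eq_abs, hεabs, one_mul]

end GaussAux

/-- The Gauss algorithm on a basis of length `M` terminates (the stopping
condition `‖u‖ ≤ ‖v‖` holds after the replacement step) within at most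
`⌈log_√3 M⌉ + 1` iterations. -/
theorem stmt_16 (d : ℕ) (u v : EuclideanSpace ℝ (Fin d))
    (hind : LinearIndependent ℝ ![u, v])
    (hint : ∀ i, ∃ zu zv : ℤ, u i = zu ∧ v i = zv)
    (M : ℝ) (hM : M = max ‖u‖ ‖v‖) :
    ∃ j : ℕ, 1 ≤ j ∧ (j : ℝ) ≤ ⌈Real.logb (Real.sqrt 3) M⌉ + 1 ∧
      ‖((gaussStep d)^[j] (u, v)).1‖ ≤ ‖((gaussStep d)^[j] (u, v)).2‖ := by
  set P : ℕ → EuclideanSpace ℝ (Fin d) × EuclideanSpace ℝ (Fin d) :=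
    fun n => (gaussStep d)^[n] (u, v) with hP
  have hPsucc : ∀ n, P (n + 1) = gaussStep d (P n) := by
    intro n; rw [hP]; exact Function.iterate_succ_apply' _ _ _
  have hgood0 : GGood (P 0) := by
    refine ⟨hind, fun i => ?_, fun i => ?_⟩
    · obtain ⟨zu, zv, h1, h2⟩ := hint i; exact ⟨zu, h1⟩
    · obtain ⟨zu, zv, h1, h2⟩ := hint i; exact ⟨zv, h2⟩
  have hgood : ∀ n, GGood (P n) := by
    intro n
    induction n with
    | zero => exact hgood0
    | succ n ih => rw [hPsucc]; exact (gaussStep_main _ ih).1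
  have hone : ∀ n, 1 ≤ ‖(P n).1‖ ∧ 1 ≤ ‖(P n).2‖ := fun n =>
    ⟨one_le_norm_of_int (hgood n).2.1 (hgood n).fst_ne_zero,
     one_le_norm_of_int (hgood n).2.2 (hgood n).snd_ne_zero⟩
  have hinner : ∀ n, |⟪(P (n+1)).1, (P (n+1)).2⟫| ≤ ‖(P (n+1)).1‖ ^ 2 / 2 := by
    intro n; rw [hPsucc]; exact (gaussStep_main _ (hgood n)).2.2.1
  -- if two consecutive steps are "bad", the first vector shrinks by √3
  have hshrink : ∀ n, ‖(P (n+1)).2‖ < ‖(P (n+1)).1‖ → ‖(P (n+2)).2‖ < ‖(P (n+2)).1‖ →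
      Real.sqrt 3 * ‖(P (n+2)).1‖ ≤ ‖(P (n+1)).1‖ := by
    intro n hb1 hb2
    set a := (P (n+1)).1
    set b := (P (n+1)).2
    have hnle : ¬ (‖a‖ ≤ ‖b‖) := not_le.mpr hb1
    obtain ⟨_, hfst, _, hm, hmeq⟩ := gaussStep_main (P (n+1)) (hgood (n+1))
    have hPn2 : P (n+2) = gaussStep d (P (n+1)) := hPsucc (n+1)
    rw [if_neg hnle, if_neg hnle] at hmeq
    rw [if_neg hnle] at hfst
    have hfst' : (P (n+2)).1 = b := by rw [hPn2, hfst]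
    have h3 : 3 * ‖b‖ ^ 2 < ‖a‖ ^ 2 := by
      by_contra hcon
      push_neg at hcon
      have hkey := gauss_key a b hm (hinner n) hcon (le_of_lt hb1)
      have : ‖(P (n+2)).1‖ ≤ ‖(P (n+2)).2‖ := by
        rw [hfst', hPn2, hmeq]
        exact hkey
      exact absurd this (not_le.mpr hb2)
    rw [hfst']
    have hbn : (0:ℝ) ≤ ‖b‖ := norm_nonneg _
    have : Real.sqrt 3 * ‖b‖ = Real.sqrt (3 * ‖b‖ ^ 2) := by
      rw [Real.sqrt_mul (by norm_num), Real.sqrt_sq hbn]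
    rw [this]
    calc Real.sqrt (3 * ‖b‖ ^ 2) ≤ Real.sqrt (‖a‖ ^ 2) :=
          Real.sqrt_le_sqrt (le_of_lt h3)
    _ = ‖a‖ := Real.sqrt_sq (norm_nonneg _)
  -- first iterate's first component is at most M
  have hP1M : ‖(P 1).1‖ ≤ M := by
    obtain ⟨_, hfst, _, _⟩ := gaussStep_main (P 0) hgood0
    rw [hPsucc 0] at *
    rw [hfst]
    rw [hM]
    have hP0 : (P 0) = (u, v) := rfl
    rw [hP0]
    split
    · exact le_max_left _ _
    · exact le_max_right _ _
  have hsqrt3 : (1:ℝ) < Real.sqrt 3 := by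
    rw [show (1:ℝ) = Real.sqrt 1 by rw [Real.sqrt_one]]
    exact Real.sqrt_lt_sqrt (by norm_num) (by norm_num)
  have hM1 : 1 ≤ M := by
    rw [hM]
    exact le_trans (hone 0).1 (le_max_left _ _)
  set C : ℤ := ⌈Real.logb (Real.sqrt 3) M⌉ with hC
  have hC0 : 0 ≤ C := Int.ceil_nonneg (Real.logb_nonneg hsqrt3 hM1)
  set N : ℕ := C.toNat + 1 with hN
  have hNC : (N : ℝ) = (C : ℝ) + 1 := by
    have hNZ : (N : ℤ) = C + 1 := by omega
    exact_mod_cast congrArg (Int.cast : ℤ → ℝ) hNZ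
  suffices h : ∃ j, 1 ≤ j ∧ j ≤ N ∧ ‖(P j).1‖ ≤ ‖(P j).2‖ by
    obtain ⟨j, h1, h2, h3⟩ := h
    refine ⟨j, h1, ?_, h3⟩
    calc (j:ℝ) ≤ (N:ℝ) := by exact_mod_cast h2
    _ = (C:ℝ) + 1 := hNC
  by_contra hcon
  push_neg at hcon
  have hbad : ∀ j, 1 ≤ j → j ≤ N → ‖(P j).2‖ < ‖(P j).1‖ := hcon
  -- the chain of shrinking
  have hchain : ∀ k, k + 1 ≤ N → Real.sqrt 3 ^ k * ‖(P (k+1)).1‖ ≤ M := by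
    intro k
    induction k with
    | zero => intro _; simpa using hP1M
    | succ k ih =>
      intro hk
      have hk' : k + 1 ≤ N := by omega
      have hb1 : ‖(P (k+1)).2‖ < ‖(P (k+1)).1‖ := hbad (k+1) (by omega) hk'
      have hb2 : ‖(P (k+2)).2‖ < ‖(P (k+2)).1‖ := hbad (k+2) (by omega) hk
      have hsh := hshrink k hb1 hb2
      have hpow : (0:ℝ) ≤ Real.sqrt 3 ^ k := by positivity
      calc Real.sqrt 3 ^ (k+1) * ‖(P (k+2)).1‖
          = Real.sqrt 3 ^ k * (Real.sqrt 3 * ‖(P (k+2)).1‖) := by ring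
      _ ≤ Real.sqrt 3 ^ k * ‖(P (k+1)).1‖ := by
          apply mul_le_mul_of_nonneg_left hsh hpow
      _ ≤ M := ih hk'
  -- apply at k = N - 1
  have hNpos : 1 ≤ N := by omega
  obtain ⟨K, hK⟩ : ∃ K, N = K + 1 := ⟨N - 1, by omega⟩
  have hchainN : Real.sqrt 3 ^ K * ‖(P N).1‖ ≤ M := by
    have := hchain K (by omega)
    rwa [← hK] at this
  have hbadN : ‖(P N).2‖ < ‖(P N).1‖ := hbad N hNpos le_rfl
  have hgt1 : 1 < ‖(P N).1‖ := lt_of_le_of_lt (hone N).2 hbadN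
  have hpowpos : (0:ℝ) < Real.sqrt 3 ^ K := by positivity
  have hlt : Real.sqrt 3 ^ K < M := by
    calc Real.sqrt 3 ^ K = Real.sqrt 3 ^ K * 1 := by ring
    _ < Real.sqrt 3 ^ K * ‖(P N).1‖ := by
        exact mul_lt_mul_of_pos_left hgt1 hpowpos
    _ ≤ M := hchainN
  -- take logs
  have hlogK : Real.logb (Real.sqrt 3) (Real.sqrt 3 ^ K) = (K : ℝ) := by
    rw [Real.logb_pow, Real.logb_self_eq_one hsqrt3]
    ring
  have hlog : (K : ℝ) < Real.logb (Real.sqrt 3) M := by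
    rw [← hlogK]
    exact Real.logb_lt_logb hsqrt3 (by positivity) hlt
  have hKC : (K : ℤ) < C := by
    rw [hC]
    exact Int.lt_ceil.mpr (by exact_mod_cast hlog)
  have : (K : ℤ) = C.toNat := by
    have : N = C.toNat + 1 := hN
    omega
  omega
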